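/- For real parameters 0 < s < t < r define R₁(x) := x/√((x²−s²)(x²−t²)(r²−x²)) for x ∈ (t, r) and R₂(x) := x/√((x²−s²)(t²−x²)(r²−x²)) for x ∈ (s, t). Both functions are positive and integrable on their respective intervals, and for every positive rational number q there exist real numbers 0 < s < t < r such that ∫_t^r R₁(x) dx = q · ∫_s^t R₂(x) dx. -/

import Mathlib

open MeasureTheory

/-- `R₁(x) = x/√((x²−s²)(x²−t²)(r²−x²))`, the integrand of the `a₁`-period of the
holomorphic differential on the hyperelliptic surface, on the interval `(t, r)`. -/
noncomputable def R₁ (s t r x : ℝ) : ℝ :=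
  x / Real.sqrt ((x ^ 2 - s ^ 2) * (x ^ 2 - t ^ 2) * (r ^ 2 - x ^ 2))

/-- `R₂(x) = x/√((x²−s²)(t²−x²)(r²−x²))`, the integrand of the `b₂`-period of the
holomorphic differential on the hyperelliptic surface, on the interval `(s, t)`. -/
noncomputable def R₂ (s t r x : ℝ) : ℝ :=
  x / Real.sqrt ((x ^ 2 - s ^ 2) * (t ^ 2 - x ^ 2) * (r ^ 2 - x ^ 2))

open Set intervalIntegral

lemma left_edge {a b C : ℝ} {f : ℝ → ℝ} (hab : a ≤ b)
    (hm : AEStronglyMeasurable f (volume.restrict (Set.Ioo a b)))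
    (hbd : ∀ x ∈ Set.Ioo a b, |f x| ≤ C / Real.sqrt (x - a)) :
    IntervalIntegrable f volume a b := by
  rw [intervalIntegrable_iff_integrableOn_Ioo_of_le hab]
  have hg : IntegrableOn (fun x => C * (x - a) ^ (-(1/2) : ℝ)) (Set.Ioo a b) volume := by
    have h1 := (intervalIntegrable_rpow' (a := 0) (b := b - a) (r := -(1/2))
      (by norm_num)).comp_sub_right a
    have h2 := h1.const_mul C
    rw [zero_add, sub_add_cancel] at h2
    exact (intervalIntegrable_iff_integrableOn_Ioo_of_le hab).mp h2
  refine hg.mono' hm ?_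
  refine ae_restrict_of_forall_mem measurableSet_Ioo fun x hx => ?_
  rw [Real.norm_eq_abs]
  calc |f x| ≤ C / Real.sqrt (x - a) := hbd x hx
    _ = C * (x - a) ^ (-(1/2) : ℝ) := by
        rw [Real.rpow_neg (by linarith [hx.1] : (0:ℝ) ≤ x - a), ← Real.sqrt_eq_rpow,
          div_eq_mul_inv]

lemma right_edge {a b C : ℝ} {f : ℝ → ℝ} (hab : a ≤ b)
    (hm : AEStronglyMeasurable f (volume.restrict (Set.Ioo a b)))
    (hbd : ∀ x ∈ Set.Ioo a b, |f x| ≤ C / Real.sqrt (b - x)) :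
    IntervalIntegrable f volume a b := by
  rw [intervalIntegrable_iff_integrableOn_Ioo_of_le hab]
  have hg : IntegrableOn (fun x => C * (b - x) ^ (-(1/2) : ℝ)) (Set.Ioo a b) volume := by
    have h1 := (intervalIntegrable_rpow' (a := 0) (b := b - a) (r := -(1/2))
      (by norm_num)).comp_sub_left b
    have h2 := (h1.symm.const_mul C)
    rw [sub_zero, sub_sub_cancel] at h2
    exact (intervalIntegrable_iff_integrableOn_Ioo_of_le hab).mp h2
  refine hg.mono' hm ?_
  refine ae_restrict_of_forall_mem measurableSet_Ioo fun x hx => ?_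
  rw [Real.norm_eq_abs]
  calc |f x| ≤ C / Real.sqrt (b - x) := hbd x hx
    _ = C * (b - x) ^ (-(1/2) : ℝ) := by
        rw [Real.rpow_neg (by linarith [hx.2] : (0:ℝ) ≤ b - x), ← Real.sqrt_eq_rpow,
          div_eq_mul_inv]

lemma edge_integrable {a b C : ℝ} {f : ℝ → ℝ} (hab : a < b)
    (hm : AEStronglyMeasurable f (volume.restrict (Set.Ioo a b)))
    (hbd : ∀ x ∈ Set.Ioo a b, |f x| ≤ C / (Real.sqrt (x - a) * Real.sqrt (b - x))) :
    IntervalIntegrable f volume a b := by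
  set m := (a + b) / 2 with hm_def
  have ham : a < m := by simp only [hm_def]; linarith
  have hmb : m < b := by simp only [hm_def]; linarith
  have hC : 0 ≤ C := by
    have h1 := (abs_nonneg (f m)).trans (hbd m ⟨ham, hmb⟩)
    have hd : 0 < Real.sqrt (m - a) * Real.sqrt (b - m) :=
      mul_pos (Real.sqrt_pos.mpr (by linarith)) (Real.sqrt_pos.mpr (by linarith))
    nlinarith [div_mul_cancel₀ C hd.ne']
  have piece1 : IntervalIntegrable f volume a m := by
    refine left_edge (C := C / Real.sqrt (b - m)) ham.le
      (hm.mono_measure (Measure.restrict_mono (Ioo_subset_Ioo le_rfl hmb.le) le_rfl)) ?_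
    intro x hx
    have h1 : |f x| ≤ C / (Real.sqrt (x - a) * Real.sqrt (b - x)) :=
      hbd x ⟨hx.1, hx.2.trans hmb⟩
    have h2 : C / (Real.sqrt (x - a) * Real.sqrt (b - x))
        ≤ C / (Real.sqrt (x - a) * Real.sqrt (b - m)) :=
      div_le_div_of_nonneg_left hC
        (mul_pos (Real.sqrt_pos.mpr (by linarith [hx.1])) (Real.sqrt_pos.mpr (by linarith)))
        (mul_le_mul_of_nonneg_left (Real.sqrt_le_sqrt (by linarith [hx.2]))
          (Real.sqrt_nonneg _))
    calc |f x| ≤ C / (Real.sqrt (x - a) * Real.sqrt (b - m)) := h1.trans h2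
      _ = C / Real.sqrt (b - m) / Real.sqrt (x - a) := by
          rw [div_div, mul_comm]
  have piece2 : IntervalIntegrable f volume m b := by
    refine right_edge (C := C / Real.sqrt (m - a)) hmb.le
      (hm.mono_measure (Measure.restrict_mono (Ioo_subset_Ioo ham.le le_rfl) le_rfl)) ?_
    intro x hx
    have h1 : |f x| ≤ C / (Real.sqrt (x - a) * Real.sqrt (b - x)) :=
      hbd x ⟨ham.trans hx.1, hx.2⟩
    have h2 : C / (Real.sqrt (x - a) * Real.sqrt (b - x))
        ≤ C / (Real.sqrt (m - a) * Real.sqrt (b - x)) :=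
      div_le_div_of_nonneg_left hC
        (mul_pos (Real.sqrt_pos.mpr (by linarith)) (Real.sqrt_pos.mpr (by linarith [hx.2])))
        (mul_le_mul_of_nonneg_right (Real.sqrt_le_sqrt (by linarith [hx.1]))
          (Real.sqrt_nonneg _))
    calc |f x| ≤ C / (Real.sqrt (m - a) * Real.sqrt (b - x)) := h1.trans h2
      _ = C / Real.sqrt (m - a) / Real.sqrt (b - x) := by rw [div_div]
  exact piece1.trans piece2

noncomputable def Jf (l v : ℝ) : ℝ := 1 / Real.sqrt (v * (1 - v) * (1 - l * v))

noncomputable def J (l : ℝ) : ℝ := ∫ v in (0:ℝ)..1, Jf l v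

lemma Jf_nonneg (l v : ℝ) : 0 ≤ Jf l v := one_div_nonneg.mpr (Real.sqrt_nonneg _)

lemma Jf_measurable (l : ℝ) : Measurable (Jf l) := by
  apply Measurable.div measurable_const
  exact (Real.continuous_sqrt.comp (by continuity)).measurable

lemma Jf_mono {l Λ v : ℝ} (hlΛ : l ≤ Λ) (hΛ : Λ < 1) (hv : v ∈ Set.Icc (0:ℝ) 1) :
    Jf l v ≤ Jf Λ v := by
  rcases eq_or_lt_of_le hv.1 with h0 | h0
  · simp [Jf, ← h0]
  rcases eq_or_lt_of_le hv.2 with h1 | h1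
  · simp [Jf, ← h1]
  · have h1v : 0 < 1 - v := sub_pos.mpr h1
    have hΛv : 0 < 1 - Λ * v := by nlinarith [mul_pos (sub_pos.mpr hΛ) h0]
    have hA : 0 < v * (1 - v) * (1 - Λ * v) := mul_pos (mul_pos h0 h1v) hΛv
    have hle : v * (1 - v) * (1 - Λ * v) ≤ v * (1 - v) * (1 - l * v) := by
      have h2 : 0 ≤ (Λ - l) * v := mul_nonneg (by linarith) h0.le
      nlinarith [mul_nonneg (mul_pos h0 h1v).le h2]
    exact one_div_le_one_div_of_le (Real.sqrt_pos.mpr hA) (Real.sqrt_le_sqrt hle)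

lemma Jf_edge {Λ v : ℝ} (h0 : 0 ≤ Λ) (h1 : Λ < 1) (hv : v ∈ Set.Ioo (0:ℝ) 1) :
    Jf Λ v ≤ (1 / Real.sqrt (1 - Λ)) / (Real.sqrt v * Real.sqrt (1 - v)) := by
  have h1v : 0 < 1 - v := sub_pos.mpr hv.2
  have hΛv : 1 - Λ ≤ 1 - Λ * v := by nlinarith [mul_nonneg h0 h1v.le]
  have harg : (1 - Λ) * (v * (1 - v)) ≤ v * (1 - v) * (1 - Λ * v) := by
    nlinarith [mul_nonneg (mul_pos hv.1 h1v).le (sub_nonneg.mpr hΛv)]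
  have hpos : 0 < (1 - Λ) * (v * (1 - v)) :=
    mul_pos (sub_pos.mpr h1) (mul_pos hv.1 h1v)
  have hsq : Real.sqrt ((1 - Λ) * (v * (1 - v))) ≤ Real.sqrt (v * (1 - v) * (1 - Λ * v)) :=
    Real.sqrt_le_sqrt harg
  have hrw : Real.sqrt ((1 - Λ) * (v * (1 - v)))
      = Real.sqrt (1 - Λ) * (Real.sqrt v * Real.sqrt (1 - v)) := by
    rw [Real.sqrt_mul (by linarith), Real.sqrt_mul hv.1.le]
  calc Jf Λ v ≤ 1 / Real.sqrt ((1 - Λ) * (v * (1 - v))) :=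
        one_div_le_one_div_of_le (Real.sqrt_pos.mpr hpos) hsq
    _ = (1 / Real.sqrt (1 - Λ)) / (Real.sqrt v * Real.sqrt (1 - v)) := by
        rw [hrw, div_div]

lemma J_integrable {l : ℝ} (hl : l < 1) : IntervalIntegrable (Jf l) volume 0 1 := by
  set Λ := max l 0 with hΛ_def
  have hΛ0 : 0 ≤ Λ := le_max_right _ _
  have hΛ1 : Λ < 1 := max_lt hl one_pos
  have hlΛ : l ≤ Λ := le_max_left _ _
  refine edge_integrable (C := 1 / Real.sqrt (1 - Λ)) one_pos
    (Jf_measurable l).aestronglyMeasurable ?_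
  intro v hv
  rw [abs_of_nonneg (Jf_nonneg l v), sub_zero]
  exact ((Jf_mono hlΛ hΛ1 ⟨hv.1.le, hv.2.le⟩).trans (Jf_edge hΛ0 hΛ1 hv))

lemma J_continuousAt {l₀ : ℝ} (h0 : 0 < l₀) (h1 : l₀ < 1) : ContinuousAt J l₀ := by
  set Λ := (1 + l₀) / 2 with hΛ_def
  have hΛ1 : Λ < 1 := by simp only [hΛ_def]; linarith
  have hl₀Λ : l₀ < Λ := by simp only [hΛ_def]; linarith
  apply intervalIntegral.continuousAt_of_dominated_interval
    (bound := Jf Λ) (μ := volume) (a := 0) (b := 1) (F := Jf)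
  · exact Filter.Eventually.of_forall fun l =>
      (Jf_measurable l).aestronglyMeasurable
  · filter_upwards [eventually_lt_nhds hl₀Λ] with l hlΛ
    apply Filter.Eventually.of_forall
    intro t ht
    rw [Set.uIoc_of_le (by norm_num : (0:ℝ) ≤ 1)] at ht
    rw [Real.norm_eq_abs, abs_of_nonneg (Jf_nonneg l t)]
    exact Jf_mono hlΛ.le hΛ1 ⟨ht.1.le, ht.2⟩
  · exact J_integrable hΛ1
  · have h_ne : ∀ᵐ t : ℝ, t ≠ (1:ℝ) := by
      refine ae_iff.mpr ?_
      simp only [ne_eq, not_not, Set.setOf_eq_eq_singleton]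
      exact Real.volume_singleton
    filter_upwards [h_ne] with t ht1 ht
    rw [Set.uIoc_of_le (by norm_num : (0:ℝ) ≤ 1)] at ht
    have htIoo : t ∈ Set.Ioo (0:ℝ) 1 := ⟨ht.1, lt_of_le_of_ne ht.2 ht1⟩
    have h1t : 0 < 1 - t := sub_pos.mpr htIoo.2
    have hpos : 0 < t * (1 - t) * (1 - l₀ * t) := by
      have : 0 < 1 - l₀ * t := by nlinarith [mul_pos (sub_pos.mpr h1) htIoo.1]
      exact mul_pos (mul_pos htIoo.1 h1t) this
    apply ContinuousAt.div continuousAt_const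
    · exact (Real.continuous_sqrt.continuousAt).comp
        (Continuous.continuousAt (by continuity))
    · exact ne_of_gt (Real.sqrt_pos.mpr hpos)

lemma sqrt_half_le : Real.sqrt (1/2) ≤ 3/4 := by
  rw [show (1/2 : ℝ) = (1/2 : ℝ) from rfl]
  calc Real.sqrt (1/2) ≤ Real.sqrt ((3/4)^2) := Real.sqrt_le_sqrt (by norm_num)
    _ = 3/4 := Real.sqrt_sq (by norm_num)

lemma integral_two_rpow : (∫ v in (0:ℝ)..(1/2), 2 * v ^ (-(1/2) : ℝ)) ≤ 3 := by
  rw [intervalIntegral.integral_const_mul, integral_rpow (Or.inl (by norm_num))]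
  have h0 : (0:ℝ) ^ (-(1/2) + 1 : ℝ) = 0 := Real.zero_rpow (by norm_num)
  have h1 : ((1:ℝ)/2) ^ (-(1/2) + 1 : ℝ) = Real.sqrt (1/2) := by
    rw [show (-(1/2) + 1 : ℝ) = 1/2 by norm_num, Real.sqrt_eq_rpow]
  rw [h0, h1, sub_zero, show (-(1/2)+1 : ℝ) = 1/2 by norm_num]
  have h2 : 2 * (Real.sqrt (1/2) / (1/2)) = 4 * Real.sqrt (1/2) := by ring
  rw [h2]
  linarith [sqrt_half_le]

lemma Jf_le_left {l v : ℝ} (h0 : 0 ≤ l) (hl : l ≤ 1/2) (hv : v ∈ Set.Icc (0:ℝ) (1/2)) :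
    Jf l v ≤ 2 * v ^ (-(1/2) : ℝ) := by
  rcases eq_or_lt_of_le hv.1 with h | h
  · simp [Jf, ← h, Real.zero_rpow (by norm_num : (-(1/2):ℝ) ≠ 0)]
  · have h1v : (1:ℝ)/2 ≤ 1 - v := by linarith [hv.2]
    have hlv : (1:ℝ)/2 ≤ 1 - l * v := by nlinarith [hv.2]
    have harg : v / 4 ≤ v * (1 - v) * (1 - l * v) := by
      have hmm : (1/2 : ℝ) * (1/2) ≤ (1 - v) * (1 - l * v) :=
        mul_le_mul h1v hlv (by norm_num) (by linarith)
      nlinarith [mul_le_mul_of_nonneg_left hmm h.le]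
    have hq : Real.sqrt (v / 4) = Real.sqrt v / 2 := by
      rw [show (4:ℝ) = 2^2 by norm_num, Real.sqrt_div h.le, Real.sqrt_sq (by norm_num)]
    have hs : Real.sqrt v / 2 ≤ Real.sqrt (v * (1 - v) * (1 - l * v)) := by
      rw [← hq]; exact Real.sqrt_le_sqrt harg
    have hvpos : 0 < Real.sqrt v / 2 := by positivity
    calc Jf l v ≤ 1 / (Real.sqrt v / 2) := one_div_le_one_div_of_le hvpos hs
      _ = 2 * v ^ (-(1/2) : ℝ) := by
          rw [Real.rpow_neg hv.1, ← Real.sqrt_eq_rpow]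
          field_simp

lemma Jf_le_right {l v : ℝ} (h0 : 0 ≤ l) (hl : l ≤ 1/2) (hv : v ∈ Set.Icc (1/2:ℝ) 1) :
    Jf l v ≤ 2 * (1 - v) ^ (-(1/2) : ℝ) := by
  rcases eq_or_lt_of_le hv.2 with h | h
  · simp [Jf, h, Real.zero_rpow (by norm_num : (-(1/2):ℝ) ≠ 0)]
  · have h1v : 0 < 1 - v := sub_pos.mpr h
    have hlv : (1:ℝ)/2 ≤ 1 - l * v := by nlinarith [hv.2]
    have harg : (1 - v) / 4 ≤ v * (1 - v) * (1 - l * v) := by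
      have hmm : (1/2 : ℝ) * (1/2) ≤ v * (1 - l * v) :=
        mul_le_mul hv.1 hlv (by norm_num) (by linarith [hv.1])
      nlinarith [mul_le_mul_of_nonneg_left hmm h1v.le]
    have hq : Real.sqrt ((1 - v) / 4) = Real.sqrt (1 - v) / 2 := by
      rw [show (4:ℝ) = 2^2 by norm_num, Real.sqrt_div h1v.le, Real.sqrt_sq (by norm_num)]
    have hs : Real.sqrt (1 - v) / 2 ≤ Real.sqrt (v * (1 - v) * (1 - l * v)) := by
      rw [← hq]; exact Real.sqrt_le_sqrt harg
    have hvpos : 0 < Real.sqrt (1 - v) / 2 := by positivity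
    calc Jf l v ≤ 1 / (Real.sqrt (1 - v) / 2) := one_div_le_one_div_of_le hvpos hs
      _ = 2 * (1 - v) ^ (-(1/2) : ℝ) := by
          rw [Real.rpow_neg h1v.le, ← Real.sqrt_eq_rpow]
          field_simp

lemma J_le_six {l : ℝ} (h0 : 0 ≤ l) (hl : l ≤ 1/2) : J l ≤ 6 := by
  have hint : IntervalIntegrable (Jf l) volume 0 1 := J_integrable (by linarith)
  have hint1 : IntervalIntegrable (Jf l) volume 0 (1/2) :=
    hint.mono_set (by rw [Set.uIcc_of_le (by norm_num : (0:ℝ) ≤ 1/2),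
      Set.uIcc_of_le (by norm_num : (0:ℝ) ≤ 1)]; exact Set.Icc_subset_Icc le_rfl (by norm_num))
  have hint2 : IntervalIntegrable (Jf l) volume (1/2) 1 :=
    hint.mono_set (by rw [Set.uIcc_of_le (by norm_num : (1/2:ℝ) ≤ 1),
      Set.uIcc_of_le (by norm_num : (0:ℝ) ≤ 1)]; exact Set.Icc_subset_Icc (by norm_num) le_rfl)
  have hsplit : J l = (∫ v in (0:ℝ)..(1/2), Jf l v) + ∫ v in (1/2:ℝ)..1, Jf l v :=
    (intervalIntegral.integral_add_adjacent_intervals hint1 hint2).symm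
  have hg1 : IntervalIntegrable (fun v : ℝ => 2 * v ^ (-(1/2) : ℝ)) volume 0 (1/2) :=
    (intervalIntegrable_rpow' (by norm_num)).const_mul 2
  have hg2 : IntervalIntegrable (fun v : ℝ => 2 * (1 - v) ^ (-(1/2) : ℝ)) volume (1/2) 1 := by
    have := ((intervalIntegrable_rpow' (a := 0) (b := 1/2) (r := -(1/2))
      (by norm_num)).const_mul 2).comp_sub_left 1
    norm_num at this
    exact this.symm
  have h1 : (∫ v in (0:ℝ)..(1/2), Jf l v) ≤ ∫ v in (0:ℝ)..(1/2), 2 * v ^ (-(1/2) : ℝ) :=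
    intervalIntegral.integral_mono_on (by norm_num) hint1 hg1
      (fun v hv => Jf_le_left h0 hl hv)
  have h2 : (∫ v in (1/2:ℝ)..1, Jf l v) ≤ ∫ v in (1/2:ℝ)..1, 2 * (1 - v) ^ (-(1/2) : ℝ) :=
    intervalIntegral.integral_mono_on (by norm_num) hint2 hg2
      (fun v hv => Jf_le_right h0 hl hv)
  have hc2 : (∫ v in (1/2:ℝ)..1, 2 * (1 - v) ^ (-(1/2) : ℝ))
      = ∫ v in (0:ℝ)..(1/2), 2 * v ^ (-(1/2) : ℝ) := by
    have := intervalIntegral.integral_comp_sub_left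
      (a := (1/2:ℝ)) (b := 1) (fun u : ℝ => 2 * u ^ (-(1/2) : ℝ)) 1
    norm_num at this ⊢
    convert this using 2
  rw [hsplit]
  have h3 := integral_two_rpow
  rw [hc2] at h2
  linarith

lemma J_ge {l : ℝ} (h1 : 1/2 ≤ l) (h2 : l < 1) :
    (2/3) * (Real.log (1/2) - Real.log (1 - l)) ≤ J l := by
  have hInt : IntervalIntegrable (Jf l) volume 0 1 := J_integrable h2
  have step1 : (∫ v in (1/2:ℝ)..l, Jf l v) ≤ J l := by
    refine intervalIntegral.integral_mono_interval (by norm_num) h1 h2.le ?_ hInt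
    exact Filter.Eventually.of_forall fun v => Jf_nonneg l v
  have hIntsub : IntervalIntegrable (Jf l) volume (1/2) l :=
    hInt.mono_set (by rw [Set.uIcc_of_le h1, Set.uIcc_of_le (by norm_num : (0:ℝ) ≤ 1)]
                      exact Set.Icc_subset_Icc (by norm_num) h2.le)
  have hgcont : IntervalIntegrable (fun v : ℝ => (2/3) * (1 - v)⁻¹) volume (1/2) l := by
    apply ContinuousOn.intervalIntegrable
    apply ContinuousOn.mul continuousOn_const
    apply ContinuousOn.inv₀ (by fun_prop)
    intro x hx
    rw [Set.uIcc_of_le h1] at hx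
    have : x ≤ l := hx.2
    intro hcon
    have : (1:ℝ) = x := by linarith [sub_eq_zero.mp hcon]
    linarith [hx.2]
  have step2 : (∫ v in (1/2:ℝ)..l, (2/3) * (1 - v)⁻¹) ≤ ∫ v in (1/2:ℝ)..l, Jf l v := by
    refine intervalIntegral.integral_mono_on h1 hgcont hIntsub ?_
    intro v hv
    have hv1 : v < 1 := lt_of_le_of_lt hv.2 h2
    have h1v : 0 < 1 - v := sub_pos.mpr hv1
    have hvpos : 0 < v := lt_of_lt_of_le (by norm_num) hv.1
    have hlv : 1 - l * v ≤ 2 * (1 - v) := by nlinarith [hv.2, h2]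
    have harg : v * (1 - v) * (1 - l * v) ≤ (9/4) * (1 - v)^2 := by
      nlinarith [mul_pos hvpos h1v, h1v, hv.2]
    have hs : Real.sqrt (v * (1 - v) * (1 - l * v)) ≤ (3/2) * (1 - v) := by
      calc Real.sqrt (v * (1 - v) * (1 - l * v)) ≤ Real.sqrt (((3/2) * (1 - v))^2) :=
            Real.sqrt_le_sqrt (by nlinarith)
        _ = (3/2) * (1 - v) := Real.sqrt_sq (by positivity)
    have hlv1 : l * v < 1 := by
      nlinarith [mul_lt_mul_of_pos_left hv1 (show (0:ℝ) < l by linarith)]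
    have hargpos : 0 < v * (1 - v) * (1 - l * v) :=
      mul_pos (mul_pos hvpos h1v) (by linarith)
    have key : 1 / ((3/2) * (1 - v)) ≤ Jf l v :=
      one_div_le_one_div_of_le (Real.sqrt_pos.mpr hargpos) hs
    calc (2/3) * (1 - v)⁻¹ = 1 / ((3/2) * (1 - v)) := by
          field_simp
        _ ≤ Jf l v := key
  have step3 : (∫ v in (1/2:ℝ)..l, (2/3) * (1 - v)⁻¹)
      = (2/3) * (Real.log (1/2) - Real.log (1 - l)) := by
    rw [intervalIntegral.integral_const_mul]
    congr 1
    have hcs := intervalIntegral.integral_comp_sub_left (a := (1/2:ℝ)) (b := l)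
      (fun u : ℝ => u⁻¹) 1
    rw [hcs, show (1 : ℝ) - 1/2 = 1/2 by norm_num]
    rw [integral_inv ?side]
    case side =>
      intro hcon
      rw [Set.mem_uIcc] at hcon
      rcases hcon with ⟨ha, hb⟩ | ⟨ha, hb⟩ <;> linarith
    rw [Real.log_div (by norm_num) (by linarith)]
  linarith [step2.trans step1, step3.symm.le]

lemma exists_root {q : ℝ} (hq : 0 < q) :
    ∃ l : ℝ, 0 < l ∧ l < 1 ∧ J (1 - l) = q * J l := by
  set Q := max q q⁻¹ with hQ_def
  have hQq : q ≤ Q := le_max_left _ _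
  have hQinv : q⁻¹ ≤ Q := le_max_right _ _
  have hQpos : 0 < Q := lt_of_lt_of_le hq hQq
  set ε := (1/2) * Real.exp (-(12*Q)) with hε_def
  have hε0 : 0 < ε := by positivity
  have hεlt : ε < 1/2 := by
    have : Real.exp (-(12*Q)) < 1 := Real.exp_lt_one_iff.mpr (by linarith)
    nlinarith [Real.exp_pos (-(12*Q))]
  have hlogε : Real.log ε = Real.log (1/2) - 12*Q := by
    rw [hε_def, Real.log_mul (by norm_num) (Real.exp_ne_zero _), Real.log_exp]
    ring
  have hJ1ε : 8*Q ≤ J (1 - ε) := by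
    have h := J_ge (l := 1 - ε) (by linarith) (by linarith)
    rw [show (1:ℝ) - (1 - ε) = ε by ring, hlogε] at h
    calc (8:ℝ)*Q = (2/3) * (Real.log (1/2) - (Real.log (1/2) - 12*Q)) := by ring
      _ ≤ J (1 - ε) := h
  have hJε : J ε ≤ 6 := J_le_six hε0.le hεlt.le
  have hqQ : 1 ≤ q * Q := by
    calc (1:ℝ) = q * q⁻¹ := (mul_inv_cancel₀ hq.ne').symm
      _ ≤ q * Q := mul_le_mul_of_nonneg_left hQinv hq.le
  set g := fun l : ℝ => J (1 - l) - q * J l with hg_def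
  have hle : ε ≤ 1 - ε := by linarith
  have hcont : ContinuousOn g (Set.Icc ε (1 - ε)) := by
    intro l hl
    have h1 : 0 < l := lt_of_lt_of_le hε0 hl.1
    have h2 : l < 1 := by linarith [hl.2]
    apply ContinuousAt.continuousWithinAt
    apply ContinuousAt.sub
    · exact (J_continuousAt (by linarith) (by linarith)).comp
        ((continuous_const.sub continuous_id).continuousAt)
    · exact (J_continuousAt h1 h2).const_mul q
  have hgε : 0 < g ε := by
    have : q * J ε ≤ 6 * q := by nlinarith
    simp only [hg_def]
    nlinarith
  have hg1ε : g (1 - ε) < 0 := by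
    simp only [hg_def, show (1:ℝ) - (1 - ε) = ε by ring]
    nlinarith [mul_le_mul_of_nonneg_left hJ1ε hq.le]
  have := intermediate_value_Icc' hle hcont (a := ε) (b := 1 - ε)
  have h0mem : (0:ℝ) ∈ Set.Icc (g (1 - ε)) (g ε) := ⟨hg1ε.le, hgε.le⟩
  obtain ⟨l, hl, hgl⟩ := this h0mem
  refine ⟨l, lt_of_lt_of_le hε0 hl.1, by linarith [hl.2], ?_⟩
  have : J (1 - l) - q * J l = 0 := hgl
  linarith

lemma R₁_pos {s t r : ℝ} (hs : 0 < s) (hst : s < t) (htr : t < r) :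
    ∀ x ∈ Set.Ioo t r, 0 < R₁ s t r x := by
  intro x hx
  have hx1 : t < x := hx.1
  have hx2 : x < r := hx.2
  have harg : 0 < (x ^ 2 - s ^ 2) * (x ^ 2 - t ^ 2) * (r ^ 2 - x ^ 2) := by
    have h1 : 0 < x ^ 2 - s ^ 2 := by nlinarith
    have h2 : 0 < x ^ 2 - t ^ 2 := by nlinarith
    have h3 : 0 < r ^ 2 - x ^ 2 := by nlinarith
    positivity
  exact div_pos (by linarith) (Real.sqrt_pos.mpr harg)

lemma R₁_measurable (s t r : ℝ) : Measurable (R₁ s t r) := by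
  apply Measurable.div measurable_id
  exact (Real.continuous_sqrt.comp (by continuity)).measurable

lemma R₁_integrable {s t r : ℝ} (hs : 0 < s) (hst : s < t) (htr : t < r) :
    IntervalIntegrable (R₁ s t r) volume t r := by
  set K := 4 * t ^ 2 * (t ^ 2 - s ^ 2) with hK_def
  have ht : 0 < t := hs.trans hst
  have hKpos : 0 < K := by
    have h1 : 0 < t ^ 2 - s ^ 2 := by nlinarith
    rw [hK_def]; nlinarith [mul_pos (pow_pos ht 2) h1]
  refine edge_integrable (C := r / Real.sqrt K) htr
    (R₁_measurable s t r).aestronglyMeasurable ?_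
  intro x hx
  have hx1 : t < x := hx.1
  have hx2 : x < r := hx.2
  have h1 : 0 < x ^ 2 - s ^ 2 := by nlinarith
  have h2 : 0 < x ^ 2 - t ^ 2 := by nlinarith
  have h3 : 0 < r ^ 2 - x ^ 2 := by nlinarith
  have harg : 0 < (x ^ 2 - s ^ 2) * (x ^ 2 - t ^ 2) * (r ^ 2 - x ^ 2) := by positivity
  have hKle : K * ((x - t) * (r - x)) ≤ (x ^ 2 - s ^ 2) * (x ^ 2 - t ^ 2) * (r ^ 2 - x ^ 2) := by
    have e2 : 2 * t * (x - t) ≤ x ^ 2 - t ^ 2 := by nlinarith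
    have e3 : 2 * t * (r - x) ≤ r ^ 2 - x ^ 2 := by nlinarith
    have e1 : t ^ 2 - s ^ 2 ≤ x ^ 2 - s ^ 2 := by nlinarith
    have p2 : 0 < 2 * t * (x - t) := by nlinarith
    have p3 : 0 < 2 * t * (r - x) := by nlinarith
    calc K * ((x - t) * (r - x))
        = (t ^ 2 - s ^ 2) * ((2 * t * (x - t)) * (2 * t * (r - x))) := by rw [hK_def]; ring
      _ ≤ (x ^ 2 - s ^ 2) * ((x ^ 2 - t ^ 2) * (r ^ 2 - x ^ 2)) := by
          have hmm : (2 * t * (x - t)) * (2 * t * (r - x))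
              ≤ (x ^ 2 - t ^ 2) * (r ^ 2 - x ^ 2) :=
            mul_le_mul e2 e3 p3.le h2.le
          exact mul_le_mul e1 hmm (by positivity) h1.le
      _ = (x ^ 2 - s ^ 2) * (x ^ 2 - t ^ 2) * (r ^ 2 - x ^ 2) := by ring
  have hsqle : Real.sqrt K * (Real.sqrt (x - t) * Real.sqrt (r - x))
      ≤ Real.sqrt ((x ^ 2 - s ^ 2) * (x ^ 2 - t ^ 2) * (r ^ 2 - x ^ 2)) := by
    rw [← Real.sqrt_mul (by linarith : (0:ℝ) ≤ x - t) (r - x),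
      ← Real.sqrt_mul hKpos.le]
    exact Real.sqrt_le_sqrt hKle
  have hdpos : 0 < Real.sqrt K * (Real.sqrt (x - t) * Real.sqrt (r - x)) := by
    have := Real.sqrt_pos.mpr hKpos
    have := Real.sqrt_pos.mpr (show (0:ℝ) < x - t by linarith)
    have := Real.sqrt_pos.mpr (show (0:ℝ) < r - x by linarith)
    positivity
  have habs : |R₁ s t r x| = R₁ s t r x :=
    abs_of_pos (R₁_pos hs hst htr x hx)
  rw [habs]
  calc R₁ s t r x
      ≤ r / (Real.sqrt K * (Real.sqrt (x - t) * Real.sqrt (r - x))) :=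
        div_le_div₀ (by linarith) (by linarith) hdpos hsqle
    _ = r / Real.sqrt K / (Real.sqrt (x - t) * Real.sqrt (r - x)) := by rw [div_div]

lemma R₂_pos {s t r : ℝ} (hs : 0 < s) (hst : s < t) (htr : t < r) :
    ∀ x ∈ Set.Ioo s t, 0 < R₂ s t r x := by
  intro x hx
  have hx1 : s < x := hx.1
  have hx2 : x < t := hx.2
  have harg : 0 < (x ^ 2 - s ^ 2) * (t ^ 2 - x ^ 2) * (r ^ 2 - x ^ 2) := by
    have h1 : 0 < x ^ 2 - s ^ 2 := by nlinarith
    have h2 : 0 < t ^ 2 - x ^ 2 := by nlinarith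
    have h3 : 0 < r ^ 2 - x ^ 2 := by nlinarith
    positivity
  exact div_pos (by linarith) (Real.sqrt_pos.mpr harg)

lemma R₂_measurable (s t r : ℝ) : Measurable (R₂ s t r) := by
  apply Measurable.div measurable_id
  exact (Real.continuous_sqrt.comp (by continuity)).measurable

lemma R₂_integrable {s t r : ℝ} (hs : 0 < s) (hst : s < t) (htr : t < r) :
    IntervalIntegrable (R₂ s t r) volume s t := by
  set K := 4 * s ^ 2 * (r ^ 2 - t ^ 2) with hK_def
  have ht : 0 < t := hs.trans hst
  have hKpos : 0 < K := by
    have h1 : 0 < r ^ 2 - t ^ 2 := by nlinarith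
    rw [hK_def]; nlinarith [mul_pos (pow_pos hs 2) h1]
  refine edge_integrable (C := t / Real.sqrt K) hst
    (R₂_measurable s t r).aestronglyMeasurable ?_
  intro x hx
  have hx1 : s < x := hx.1
  have hx2 : x < t := hx.2
  have h1 : 0 < x ^ 2 - s ^ 2 := by nlinarith
  have h2 : 0 < t ^ 2 - x ^ 2 := by nlinarith
  have h3 : 0 < r ^ 2 - x ^ 2 := by nlinarith
  have hKle : K * ((x - s) * (t - x)) ≤ (x ^ 2 - s ^ 2) * (t ^ 2 - x ^ 2) * (r ^ 2 - x ^ 2) := by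
    have e1 : 2 * s * (x - s) ≤ x ^ 2 - s ^ 2 := by nlinarith
    have e2 : 2 * s * (t - x) ≤ t ^ 2 - x ^ 2 := by nlinarith
    have e3 : r ^ 2 - t ^ 2 ≤ r ^ 2 - x ^ 2 := by nlinarith
    have p1 : 0 < 2 * s * (x - s) := by nlinarith
    have p2 : 0 < 2 * s * (t - x) := by nlinarith
    calc K * ((x - s) * (t - x))
        = ((2 * s * (x - s)) * (2 * s * (t - x))) * (r ^ 2 - t ^ 2) := by rw [hK_def]; ring
      _ ≤ ((x ^ 2 - s ^ 2) * (t ^ 2 - x ^ 2)) * (r ^ 2 - x ^ 2) := by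
          have hmm : (2 * s * (x - s)) * (2 * s * (t - x))
              ≤ (x ^ 2 - s ^ 2) * (t ^ 2 - x ^ 2) :=
            mul_le_mul e1 e2 p2.le h1.le
          exact mul_le_mul hmm e3 (by nlinarith) (by positivity)
  have hsqle : Real.sqrt K * (Real.sqrt (x - s) * Real.sqrt (t - x))
      ≤ Real.sqrt ((x ^ 2 - s ^ 2) * (t ^ 2 - x ^ 2) * (r ^ 2 - x ^ 2)) := by
    rw [← Real.sqrt_mul (by linarith : (0:ℝ) ≤ x - s) (t - x),
      ← Real.sqrt_mul hKpos.le]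
    exact Real.sqrt_le_sqrt hKle
  have hdpos : 0 < Real.sqrt K * (Real.sqrt (x - s) * Real.sqrt (t - x)) := by
    have := Real.sqrt_pos.mpr hKpos
    have := Real.sqrt_pos.mpr (show (0:ℝ) < x - s by linarith)
    have := Real.sqrt_pos.mpr (show (0:ℝ) < t - x by linarith)
    positivity
  rw [abs_of_pos (R₂_pos hs hst htr x hx)]
  calc R₂ s t r x
      ≤ t / (Real.sqrt K * (Real.sqrt (x - s) * Real.sqrt (t - x))) :=
        div_le_div₀ (by linarith) (by linarith) hdpos hsqle
    _ = t / Real.sqrt K / (Real.sqrt (x - s) * Real.sqrt (t - x)) := by rw [div_div]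

lemma subst₂ {l : ℝ} (h0 : 0 < l) (h1 : l < 1) :
    (∫ x in (1:ℝ)..(Real.sqrt (1+l)), R₂ 1 (Real.sqrt (1+l)) (Real.sqrt 2) x)
      = (1/2) * J l := by
  set t := Real.sqrt (1+l) with ht_def
  set r := Real.sqrt 2 with hr_def
  have h1l : (0:ℝ) < 1 + l := by linarith
  have ht2 : t ^ 2 = 1 + l := Real.sq_sqrt h1l.le
  have hr2 : r ^ 2 = 2 := Real.sq_sqrt (by norm_num)
  have ht1 : 1 < t := by
    calc (1:ℝ) = Real.sqrt 1 := Real.sqrt_one.symm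
      _ < t := Real.sqrt_lt_sqrt (by norm_num) (by linarith)
  have htr : t < r := Real.sqrt_lt_sqrt h1l.le (by linarith)
  set f : ℝ → ℝ := fun v => Real.sqrt (1 + l * v) with hf_def
  set F : ℝ → ℝ := fun v => l / (2 * Real.sqrt (1 + l * v)) with hF_def
  have hfpos : ∀ v : ℝ, 0 ≤ v → 0 < 1 + l * v := fun v hv => by nlinarith
  have hderiv : ∀ v ∈ Set.Ioo (0:ℝ) 1, HasDerivAt f (F v) v := by
    intro v hv
    have hy : 0 < 1 + l * v := hfpos v hv.1.le
    have ha : HasDerivAt (fun v : ℝ => 1 + l * v) l v := by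
      simpa using ((hasDerivAt_id v).const_mul l).const_add 1
    have hsq := (Real.hasDerivAt_sqrt hy.ne').comp v ha
    have heq : 1 / (2 * Real.sqrt (1 + l * v)) * l = F v := by
      rw [hF_def]; ring
    exact heq ▸ hsq
  have himg : ∀ v ∈ Set.Ioo (0:ℝ) 1, f v ∈ Set.Ioo 1 t := by
    intro v hv
    constructor
    · calc (1:ℝ) = Real.sqrt 1 := Real.sqrt_one.symm
        _ < f v := Real.sqrt_lt_sqrt (by norm_num) (by nlinarith [hv.1])
    · exact Real.sqrt_lt_sqrt (hfpos v hv.1.le).le (by nlinarith [hv.2])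
  have hid : ∀ v ∈ Set.Ioo (0:ℝ) 1, F v * R₂ 1 t r (f v) = (1/2) * Jf l v := by
    intro v hv
    have hy : 0 < 1 + l * v := hfpos v hv.1.le
    have hfv2 : f v ^ 2 = 1 + l * v := Real.sq_sqrt hy.le
    have hargeq : (f v ^ 2 - 1 ^ 2) * (t ^ 2 - f v ^ 2) * (r ^ 2 - f v ^ 2)
        = l ^ 2 * (v * (1 - v) * (1 - l * v)) := by rw [hfv2, ht2, hr2]; ring
    have hw : 0 < v * (1 - v) * (1 - l * v) := by
      have h2 : 0 < 1 - l * v := by nlinarith [mul_lt_mul_of_pos_left hv.2 h0]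
      exact mul_pos (mul_pos hv.1 (by linarith [hv.2])) h2
    have hsf : 0 < Real.sqrt (1 + l * v) := Real.sqrt_pos.mpr hy
    have hsw : 0 < Real.sqrt (v * (1 - v) * (1 - l * v)) := Real.sqrt_pos.mpr hw
    simp only [R₂, Jf, hF_def, hf_def]
    rw [show Real.sqrt (1 + l * v) ^ 2 = 1 + l * v from Real.sq_sqrt hy.le]
    rw [show (1 + l * v - 1 ^ 2) * (t ^ 2 - (1 + l * v)) * (r ^ 2 - (1 + l * v))
        = l ^ 2 * (v * (1 - v) * (1 - l * v)) by rw [ht2, hr2]; ring]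
    rw [Real.sqrt_mul (sq_nonneg l), Real.sqrt_sq h0.le]
    field_simp
  have hcf : ContinuousOn f (Set.uIcc 0 1) := by
    apply Continuous.continuousOn
    exact Real.continuous_sqrt.comp (by continuity)
  have hmin : min (0:ℝ) 1 = 0 := by norm_num
  have hmax : max (0:ℝ) 1 = 1 := by norm_num
  have hder' : ∀ x ∈ Set.Ioo (min (0:ℝ) 1) (max (0:ℝ) 1),
      HasDerivWithinAt f (F x) (Set.Ioi x) x := by
    rw [hmin, hmax]
    exact fun x hx => (hderiv x hx).hasDerivWithinAt
  have hRcont : ContinuousOn (R₂ 1 t r) (Set.Ioo 1 t) := by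
    have hcont : Continuous fun y : ℝ =>
        (y ^ 2 - 1 ^ 2) * (t ^ 2 - y ^ 2) * (r ^ 2 - y ^ 2) := by fun_prop
    intro y hy
    have hy2 : 0 < (y ^ 2 - 1 ^ 2) * (t ^ 2 - y ^ 2) * (r ^ 2 - y ^ 2) := by
      have e1 : 0 < y ^ 2 - 1 ^ 2 := by nlinarith [hy.1]
      have e2 : 0 < t ^ 2 - y ^ 2 := by nlinarith [hy.1, hy.2]
      have e3 : 0 < r ^ 2 - y ^ 2 := by
        rw [hr2]; nlinarith [hy.1, hy.2, ht2, h1]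
      positivity
    apply ContinuousAt.continuousWithinAt
    have hca : ContinuousAt (fun x : ℝ =>
        x / Real.sqrt ((x ^ 2 - 1 ^ 2) * (t ^ 2 - x ^ 2) * (r ^ 2 - x ^ 2))) y :=
      ContinuousAt.div continuousAt_id
        (Real.continuous_sqrt.continuousAt.comp hcont.continuousAt)
        (Real.sqrt_pos.mpr hy2).ne'
    exact hca
  have hgc : ContinuousOn (R₂ 1 t r) (f '' Set.Ioo (min (0:ℝ) 1) (max (0:ℝ) 1)) := by
    rw [hmin, hmax]
    refine hRcont.mono ?_
    rintro y ⟨v, hv, rfl⟩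
    exact himg v hv
  have hg1 : IntegrableOn (R₂ 1 t r) (f '' Set.uIcc (0:ℝ) 1) volume := by
    have hsub : f '' Set.uIcc (0:ℝ) 1 ⊆ Set.Icc 1 t := by
      rintro y ⟨v, hv, rfl⟩
      rw [Set.uIcc_of_le (by norm_num : (0:ℝ) ≤ 1)] at hv
      constructor
      · calc (1:ℝ) = Real.sqrt 1 := Real.sqrt_one.symm
          _ ≤ f v := Real.sqrt_le_sqrt (by nlinarith [hv.1])
      · exact Real.sqrt_le_sqrt (by nlinarith [hv.2])
    refine IntegrableOn.mono_set ?_ hsub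
    have := R₂_integrable (s := 1) (t := t) (r := r) one_pos ht1 htr
    rwa [intervalIntegrable_iff_integrableOn_Icc_of_le ht1.le] at this
  have hnull01 : volume ({0, 1} : Set ℝ) = 0 := by
    have : ({0, 1} : Set ℝ).Finite := Set.toFinite _
    exact this.measure_zero volume
  have hg2 : IntegrableOn (fun x => F x • (R₂ 1 t r ∘ f) x) (Set.uIcc (0:ℝ) 1) volume := by
    rw [Set.uIcc_of_le (by norm_num : (0:ℝ) ≤ 1)]
    have hJint : IntegrableOn (fun v => (1/2) * Jf l v) (Set.Icc 0 1) volume := by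
      have h := (J_integrable h1).const_mul (1/2)
      rwa [intervalIntegrable_iff_integrableOn_Icc_of_le (by norm_num : (0:ℝ) ≤ 1)] at h
    refine hJint.congr ?_
    have hc := ae_restrict_of_ae (μ := volume) (s := Set.Icc (0:ℝ) 1)
      (compl_mem_ae_iff.mpr hnull01)
    filter_upwards [hc, ae_restrict_mem measurableSet_Icc] with v hv1 hv2
    have hv1' : v ≠ 0 ∧ v ≠ 1 := by simpa using hv1
    have hvIoo : v ∈ Set.Ioo (0:ℝ) 1 :=
      ⟨lt_of_le_of_ne hv2.1 (Ne.symm hv1'.1), lt_of_le_of_ne hv2.2 hv1'.2⟩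
    simp only [Function.comp, smul_eq_mul]
    exact (hid v hvIoo).symm
  have hmain := intervalIntegral.integral_comp_smul_deriv''' (a := (0:ℝ)) (b := 1)
    hcf hder' hgc hg1 hg2
  have hf0 : f 0 = 1 := by simp [hf_def]
  have hf1 : f 1 = t := by simp [hf_def, ht_def]
  rw [hf0, hf1] at hmain
  rw [← hmain]
  have hcgr : (∫ v in (0:ℝ)..1, F v • (R₂ 1 t r ∘ f) v)
      = ∫ v in (0:ℝ)..1, (1/2) * Jf l v := by
    apply intervalIntegral.integral_congr_ae
    filter_upwards [compl_mem_ae_iff.mpr (Real.volume_singleton (a := 1))] with v hv1 hv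
    rw [Set.uIoc_of_le (by norm_num : (0:ℝ) ≤ 1)] at hv
    have hvIoo : v ∈ Set.Ioo (0:ℝ) 1 := ⟨hv.1, lt_of_le_of_ne hv.2 (by simpa using hv1)⟩
    simp only [Function.comp, smul_eq_mul]
    exact hid v hvIoo
  rw [hcgr, intervalIntegral.integral_const_mul]
  rfl

set_option maxHeartbeats 1000000 in
lemma subst₁ {l : ℝ} (h0 : 0 < l) (h1 : l < 1) :
    (∫ x in (Real.sqrt (1+l))..(Real.sqrt 2), R₁ 1 (Real.sqrt (1+l)) (Real.sqrt 2) x)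
      = (1/2) * J (1 - l) := by
  set t := Real.sqrt (1+l) with ht_def
  set r := Real.sqrt 2 with hr_def
  have h1l : (0:ℝ) < 1 + l := by linarith
  have ht2 : t ^ 2 = 1 + l := Real.sq_sqrt h1l.le
  have hr2 : r ^ 2 = 2 := Real.sq_sqrt (by norm_num)
  have ht1 : 1 < t := by
    calc (1:ℝ) = Real.sqrt 1 := Real.sqrt_one.symm
      _ < t := Real.sqrt_lt_sqrt (by norm_num) (by linarith)
  have htr : t < r := Real.sqrt_lt_sqrt h1l.le (by linarith)
  set f : ℝ → ℝ := fun v => Real.sqrt (1 + l + (1 - l) * v) with hf_def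
  set F : ℝ → ℝ := fun v => (1 - l) / (2 * Real.sqrt (1 + l + (1 - l) * v)) with hF_def
  have hfpos : ∀ v : ℝ, 0 ≤ v → 0 < 1 + l + (1 - l) * v := fun v hv => by nlinarith
  have hderiv : ∀ v ∈ Set.Ioo (0:ℝ) 1, HasDerivAt f (F v) v := by
    intro v hv
    have hy : 0 < 1 + l + (1 - l) * v := hfpos v hv.1.le
    have ha : HasDerivAt (fun v : ℝ => 1 + l + (1 - l) * v) (1 - l) v := by
      simpa using ((hasDerivAt_id v).const_mul (1 - l)).const_add (1 + l)
    have hsq := (Real.hasDerivAt_sqrt hy.ne').comp v ha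
    have heq : 1 / (2 * Real.sqrt (1 + l + (1 - l) * v)) * (1 - l) = F v := by
      rw [hF_def]; ring
    exact heq ▸ hsq
  have himg : ∀ v ∈ Set.Ioo (0:ℝ) 1, f v ∈ Set.Ioo t r := by
    intro v hv
    constructor
    · exact Real.sqrt_lt_sqrt h1l.le (by nlinarith [mul_pos (sub_pos.mpr h1) hv.1])
    · exact Real.sqrt_lt_sqrt (hfpos v hv.1.le).le
        (by nlinarith [mul_lt_mul_of_pos_left hv.2 (sub_pos.mpr h1)])
  have hid : ∀ v ∈ Set.Ioo (0:ℝ) 1,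
      F v * R₁ 1 t r (f v) = (1/2) * Jf (1 - l) (1 - v) := by
    intro v hv
    have hy : 0 < 1 + l + (1 - l) * v := hfpos v hv.1.le
    have hw : 0 < (1 - v) * (1 - (1 - v)) * (1 - (1 - l) * (1 - v)) := by
      have e1 : 0 < 1 - (1 - l) * (1 - v) := by
        nlinarith [mul_lt_mul_of_pos_left (show 1 - v < 1 by linarith [hv.1])
          (sub_pos.mpr h1)]
      exact mul_pos (mul_pos (by linarith [hv.2]) (by simpa using hv.1)) e1
    have hsf : 0 < Real.sqrt (1 + l + (1 - l) * v) := Real.sqrt_pos.mpr hy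
    simp only [R₁, Jf, hF_def, hf_def]
    rw [show Real.sqrt (1 + l + (1 - l) * v) ^ 2 = 1 + l + (1 - l) * v from
      Real.sq_sqrt hy.le]
    rw [show (1 + l + (1 - l) * v - 1 ^ 2) * (1 + l + (1 - l) * v - t ^ 2)
        * (r ^ 2 - (1 + l + (1 - l) * v))
        = (1 - l) ^ 2 * ((1 - v) * (1 - (1 - v)) * (1 - (1 - l) * (1 - v))) by
      rw [ht2, hr2]; ring]
    rw [Real.sqrt_mul (sq_nonneg (1 - l)), Real.sqrt_sq (by linarith : (0:ℝ) ≤ 1 - l)]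
    have hsw : 0 < Real.sqrt ((1 - v) * (1 - (1 - v)) * (1 - (1 - l) * (1 - v))) :=
      Real.sqrt_pos.mpr hw
    rw [div_mul_div_comm]
    rw [show (2 * Real.sqrt (1 + l + (1 - l) * v))
        * ((1 - l) * Real.sqrt ((1 - v) * (1 - (1 - v)) * (1 - (1 - l) * (1 - v))))
        = ((1 - l) * Real.sqrt (1 + l + (1 - l) * v))
          * (2 * Real.sqrt ((1 - v) * (1 - (1 - v)) * (1 - (1 - l) * (1 - v)))) by ring]
    rw [div_mul_cancel_left₀
      (mul_ne_zero (show (1:ℝ) - l ≠ 0 by linarith) hsf.ne')]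
    rw [mul_inv]
    ring
  have hcf : ContinuousOn f (Set.uIcc 0 1) := by
    apply Continuous.continuousOn
    exact Real.continuous_sqrt.comp (by continuity)
  have hmin : min (0:ℝ) 1 = 0 := by norm_num
  have hmax : max (0:ℝ) 1 = 1 := by norm_num
  have hder' : ∀ x ∈ Set.Ioo (min (0:ℝ) 1) (max (0:ℝ) 1),
      HasDerivWithinAt f (F x) (Set.Ioi x) x := by
    rw [hmin, hmax]
    exact fun x hx => (hderiv x hx).hasDerivWithinAt
  have hRcont : ContinuousOn (R₁ 1 t r) (Set.Ioo t r) := by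
    have hcont : Continuous fun y : ℝ =>
        (y ^ 2 - 1 ^ 2) * (y ^ 2 - t ^ 2) * (r ^ 2 - y ^ 2) := by fun_prop
    intro y hy
    have htpos : 0 < t := by linarith
    have hy2 : 0 < (y ^ 2 - 1 ^ 2) * (y ^ 2 - t ^ 2) * (r ^ 2 - y ^ 2) := by
      have e1 : 0 < y ^ 2 - 1 ^ 2 := by nlinarith [hy.1, ht1]
      have e2 : 0 < y ^ 2 - t ^ 2 := by nlinarith [hy.1]
      have e3 : 0 < r ^ 2 - y ^ 2 := by nlinarith [hy.2, Real.sqrt_nonneg 2, hy.1]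
      positivity
    apply ContinuousAt.continuousWithinAt
    have hca : ContinuousAt (fun x : ℝ =>
        x / Real.sqrt ((x ^ 2 - 1 ^ 2) * (x ^ 2 - t ^ 2) * (r ^ 2 - x ^ 2))) y :=
      ContinuousAt.div continuousAt_id
        (Real.continuous_sqrt.continuousAt.comp hcont.continuousAt)
        (Real.sqrt_pos.mpr hy2).ne'
    exact hca
  have hgc : ContinuousOn (R₁ 1 t r) (f '' Set.Ioo (min (0:ℝ) 1) (max (0:ℝ) 1)) := by
    rw [hmin, hmax]
    refine hRcont.mono ?_
    rintro y ⟨v, hv, rfl⟩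
    exact himg v hv
  have hg1 : IntegrableOn (R₁ 1 t r) (f '' Set.uIcc (0:ℝ) 1) volume := by
    have hsub : f '' Set.uIcc (0:ℝ) 1 ⊆ Set.Icc t r := by
      rintro y ⟨v, hv, rfl⟩
      rw [Set.uIcc_of_le (by norm_num : (0:ℝ) ≤ 1)] at hv
      constructor
      · exact Real.sqrt_le_sqrt (by nlinarith [mul_nonneg (sub_pos.mpr h1).le hv.1])
      · exact Real.sqrt_le_sqrt
          (by nlinarith [mul_le_mul_of_nonneg_left hv.2 (sub_pos.mpr h1).le])
    refine IntegrableOn.mono_set ?_ hsub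
    have := R₁_integrable (s := 1) (t := t) (r := r) one_pos ht1 htr
    rwa [intervalIntegrable_iff_integrableOn_Icc_of_le htr.le] at this
  have hnull01 : volume ({0, 1} : Set ℝ) = 0 := by
    have : ({0, 1} : Set ℝ).Finite := Set.toFinite _
    exact this.measure_zero volume
  have hJflip : IntervalIntegrable (fun v => (1/2) * Jf (1 - l) (1 - v)) volume 0 1 := by
    have h := ((J_integrable (show 1 - l < 1 by linarith)).const_mul (1/2)).comp_sub_left 1
    norm_num at h
    exact h.symm
  have hg2 : IntegrableOn (fun x => F x • (R₁ 1 t r ∘ f) x) (Set.uIcc (0:ℝ) 1) volume := by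
    rw [Set.uIcc_of_le (by norm_num : (0:ℝ) ≤ 1)]
    have hJint : IntegrableOn (fun v => (1/2) * Jf (1 - l) (1 - v)) (Set.Icc 0 1) volume := by
      rwa [intervalIntegrable_iff_integrableOn_Icc_of_le (by norm_num : (0:ℝ) ≤ 1)] at hJflip
    refine hJint.congr ?_
    have hc := ae_restrict_of_ae (μ := volume) (s := Set.Icc (0:ℝ) 1)
      (compl_mem_ae_iff.mpr hnull01)
    filter_upwards [hc, ae_restrict_mem measurableSet_Icc] with v hv1 hv2
    have hv1' : v ≠ 0 ∧ v ≠ 1 := by simpa using hv1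
    have hvIoo : v ∈ Set.Ioo (0:ℝ) 1 :=
      ⟨lt_of_le_of_ne hv2.1 (Ne.symm hv1'.1), lt_of_le_of_ne hv2.2 hv1'.2⟩
    simp only [Function.comp, smul_eq_mul]
    exact (hid v hvIoo).symm
  have hmain := intervalIntegral.integral_comp_smul_deriv''' (a := (0:ℝ)) (b := 1)
    hcf hder' hgc hg1 hg2
  have hf0 : f 0 = t := by simp [hf_def, ht_def]
  have hf1 : f 1 = r := by
    simp only [hf_def]
    rw [show (1:ℝ) + l + (1 - l) * 1 = 2 by ring]
  rw [hf0, hf1] at hmain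
  rw [← hmain]
  have hcgr : (∫ v in (0:ℝ)..1, F v • (R₁ 1 t r ∘ f) v)
      = ∫ v in (0:ℝ)..1, (1/2) * Jf (1 - l) (1 - v) := by
    apply intervalIntegral.integral_congr_ae
    filter_upwards [compl_mem_ae_iff.mpr (Real.volume_singleton (a := 1))] with v hv1 hv
    rw [Set.uIoc_of_le (by norm_num : (0:ℝ) ≤ 1)] at hv
    have hvIoo : v ∈ Set.Ioo (0:ℝ) 1 := ⟨hv.1, lt_of_le_of_ne hv.2 (by simpa using hv1)⟩
    simp only [Function.comp, smul_eq_mul]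
    exact hid v hvIoo
  rw [hcgr]
  have hflip : (∫ v in (0:ℝ)..1, Jf (1 - l) (1 - v)) = J (1 - l) := by
    rw [intervalIntegral.integral_comp_sub_left (Jf (1 - l)) 1]
    simp only [sub_self, sub_zero]
    rfl
  rw [intervalIntegral.integral_const_mul, hflip]

/-- For `0 < s < t < r`, the functions `R₁` and `R₂` are positive and
integrable on `(t, r)` and `(s, t)` respectively, and for every positive rational `q`
the branch points can be chosen so that `∫_t^r R₁ = q · ∫_s^t R₂`. -/
theorem hyperelliptic_periods_mutually_rational :
    (∀ s t r : ℝ, 0 < s → s < t → t < r →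
      (∀ x ∈ Set.Ioo t r, 0 < R₁ s t r x) ∧
      (∀ x ∈ Set.Ioo s t, 0 < R₂ s t r x) ∧
      IntervalIntegrable (R₁ s t r) volume t r ∧
      IntervalIntegrable (R₂ s t r) volume s t) ∧
    (∀ q : ℚ, 0 < q → ∃ s t r : ℝ, 0 < s ∧ s < t ∧ t < r ∧
      (∫ x in t..r, R₁ s t r x) = (q : ℝ) * ∫ x in s..t, R₂ s t r x) := by
  constructor
  · intro s t r hs hst htr
    exact ⟨R₁_pos hs hst htr, R₂_pos hs hst htr,
      R₁_integrable hs hst htr, R₂_integrable hs hst htr⟩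
  · intro q hq
    have hq' : (0:ℝ) < (q:ℝ) := by exact_mod_cast hq
    obtain ⟨l, hl0, hl1, hJ⟩ := exists_root hq'
    refine ⟨1, Real.sqrt (1+l), Real.sqrt 2, one_pos, ?_, ?_, ?_⟩
    · calc (1:ℝ) = Real.sqrt 1 := Real.sqrt_one.symm
        _ < Real.sqrt (1+l) := Real.sqrt_lt_sqrt (by norm_num) (by linarith)
    · exact Real.sqrt_lt_sqrt (by linarith) (by linarith)
    · rw [subst₁ hl0 hl1, subst₂ hl0 hl1, hJ]; ring
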